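/- Under the same hypotheses (a symmetric continuous coercive with constants γ, α; b continuous with inf-sup constant β > 0; (e_u,e_p) solving the saddle-point system with data r₁ ∈ V', r₂ ∈ Q'), the pressure component satisfies ‖e_p‖_Q ≤ (2/β)√(γ/α)‖r₁‖_{V'} + (γ/β²)‖r₂‖_{Q'}. -/

import Mathlib

set_option maxHeartbeats 1000000

private lemma sq_le_aux (X M : ℝ) (hM : 0 ≤ M) (h : X ^ 2 ≤ M ^ 2) : X ≤ M := by
  nlinarith

private lemma amgm_aux (β g r p : ℝ) (hβ : 0 < β) (hg : 0 ≤ g) (hr : 0 ≤ r)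
    (hp : 0 ≤ p) :
    2 * β * (Real.sqrt g * Real.sqrt (r * p)) ≤ g * r + β ^ 2 * p := by
  have hu : (0:ℝ) ≤ g * r := mul_nonneg hg hr
  have hw' : (0:ℝ) ≤ β ^ 2 * p := by positivity
  have hprod : Real.sqrt (g * r) * Real.sqrt (β ^ 2 * p) =
      β * (Real.sqrt g * Real.sqrt (r * p)) := by
    rw [← Real.sqrt_mul hu]
    rw [show g * r * (β ^ 2 * p) = β ^ 2 * (g * (r * p)) by ring]
    rw [Real.sqrt_mul (by positivity), Real.sqrt_sq hβ.le, Real.sqrt_mul hg]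
  have h7 := sq_nonneg (Real.sqrt (g * r) - Real.sqrt (β ^ 2 * p))
  have h8 : Real.sqrt (g * r) ^ 2 = g * r := Real.sq_sqrt hu
  have h9 : Real.sqrt (β ^ 2 * p) ^ 2 = β ^ 2 * p := Real.sq_sqrt hw'
  nlinarith [h7, h8, h9, hprod]

private lemma final_aux (β E S R1 g R2 sc : ℝ) (hβ : 0 < β)
    (hlin : β * E ≤ S * R1 + sc) (hamgm : 2 * β * sc ≤ g * R2 + β ^ 2 * E) :
    E * β ^ 2 ≤ 2 * β * (S * R1) + g * R2 := by
  have h15 := mul_le_mul_of_nonneg_left hlin (by positivity : (0:ℝ) ≤ 2 * β)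
  nlinarith [h15, hamgm]

private lemma cs_aux (P X D t : ℝ) (hpos : 0 ≤ P - 2 * t * X + t ^ 2 * D)
    (hD : 0 < D) (htD : t * D = X) : X ^ 2 ≤ P * D := by
  nlinarith [mul_nonneg hpos hD.le]


theorem stmt_16 {V Q : Type*}
    [NormedAddCommGroup V] [InnerProductSpace ℝ V] [CompleteSpace V]
    [NormedAddCommGroup Q] [InnerProductSpace ℝ Q] [CompleteSpace Q]
    (a : V →ₗ[ℝ] V →ₗ[ℝ] ℝ) (b : V →ₗ[ℝ] Q →ₗ[ℝ] ℝ)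
    (α γ β : ℝ) (hα : 0 < α) (hβ : 0 < β)
    (hsymm : ∀ u v : V, a u v = a v u)
    (hcont : ∀ u v : V, |a u v| ≤ γ * ‖u‖ * ‖v‖)
    (hcoer : ∀ u : V, α * ‖u‖ ^ 2 ≤ a u u)
    (hbcont : ∃ C : ℝ, ∀ (v : V) (q : Q), |b v q| ≤ C * ‖v‖ * ‖q‖)
    (hinfsup : ∀ q : Q, q ≠ 0 → ∃ v : V, v ≠ 0 ∧ β * ‖q‖ * ‖v‖ ≤ b v q)
    (r₁ : V →L[ℝ] ℝ) (r₂ : Q →L[ℝ] ℝ) (eu : V) (ep : Q)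
    (h1 : ∀ v : V, a eu v + b v ep = r₁ v)
    (h2 : ∀ q : Q, b eu q = r₂ q) :
    ‖ep‖ ≤ (2 / β) * Real.sqrt (γ / α) * ‖r₁‖ + (γ / β ^ 2) * ‖r₂‖ := by
  by_cases hep : ep = 0
  · -- trivial case ep = 0 : the RHS is nonnegative
    subst hep
    simp only [norm_zero]
    by_cases hV : ∃ u : V, u ≠ 0
    · obtain ⟨u, hu⟩ := hV
      have hu2 : 0 < ‖u‖ := norm_pos_iff.mpr hu
      have hγα : α ≤ γ := by
        have hc := hcoer u
        have hc2 := (abs_le.mp (hcont u u)).2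
        rw [pow_two] at hc
        nlinarith [mul_pos hu2 hu2]
      have hγ : 0 < γ := lt_of_lt_of_le hα hγα
      positivity
    · push_neg at hV
      have hr1 : r₁ = 0 := by ext v; rw [hV v]; simp
      have hr2 : r₂ = 0 := by ext q; rw [← h2 q, hV eu]; simp
      simp [hr1, hr2]
  -- main case
  obtain ⟨v₀, hv₀, hbv₀⟩ := hinfsup ep hep
  have hv₀n : 0 < ‖v₀‖ := norm_pos_iff.mpr hv₀
  have hγα : α ≤ γ := by
    have hc := hcoer v₀
    have hc2 := (abs_le.mp (hcont v₀ v₀)).2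
    rw [pow_two] at hc
    nlinarith [mul_pos hv₀n hv₀n]
  have hγ : 0 < γ := lt_of_lt_of_le hα hγα
  -- the bounded bilinear operator and Lax–Milgram
  have hA : ∀ u v : V, ‖a u v‖ ≤ γ * ‖u‖ * ‖v‖ := fun u v => by
    rw [Real.norm_eq_abs]; exact hcont u v
  set A : V →L[ℝ] V →L[ℝ] ℝ := LinearMap.mkContinuous₂ a γ hA with hAdef
  have hAa : ∀ u v, A u v = a u v := fun u v => rfl
  have hcoA : IsCoercive A := ⟨α, hα, fun u => by
    rw [hAa]; have := hcoer u; nlinarith⟩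
  obtain ⟨w, hw⟩ : ∃ w : V, ∀ v, a w v = r₁ v := by
    refine ⟨hcoA.continuousLinearEquivOfBilin.symm
      ((InnerProductSpace.toDual ℝ V).symm r₁), fun v => ?_⟩
    rw [← hAa, ← hcoA.continuousLinearEquivOfBilin_apply,
      ContinuousLinearEquiv.apply_symm_apply, InnerProductSpace.toDual_symm_apply]
  set e : V := w - eu with hedef
  -- key identity : a e v = b v ep
  have key : ∀ v : V, a e v = b v ep := by
    intro v
    have := h1 v
    simp only [hedef, map_sub, LinearMap.sub_apply]
    rw [hw v]
    linarith
  set P : ℝ := a e e with hPdef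
  have hP0 : 0 ≤ P := le_trans (by positivity) (hcoer e)
  set s : ℝ := Real.sqrt P with hsdef
  have hs0 : 0 ≤ s := Real.sqrt_nonneg _
  have hs2 : s ^ 2 = P := Real.sq_sqrt hP0
  -- ‖e‖ ≤ s / √α, in product form
  have hne : Real.sqrt α * ‖e‖ ≤ s := by
    rw [hsdef]
    have h1' : α * ‖e‖ ^ 2 ≤ P := hcoer e
    have : Real.sqrt α * ‖e‖ = Real.sqrt (α * ‖e‖ ^ 2) := by
      rw [Real.sqrt_mul hα.le, Real.sqrt_sq (norm_nonneg e)]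
    rw [this]
    exact Real.sqrt_le_sqrt h1'
  -- P = r₁ e - r₂ ep
  have hPval : P = r₁ e - r₂ ep := by
    have h3 : a e eu = r₂ ep := by
      rw [key eu, h2 ep]
    have h4 : a e w = r₁ e := by rw [← hsymm, hw e]
    have : P = a e w - a e eu := by
      rw [hPdef, hedef]; simp [map_sub]
    rw [this, h3, h4]
  have hR1 : (0:ℝ) ≤ ‖r₁‖ := norm_nonneg _
  have hR2 : (0:ℝ) ≤ ‖r₂‖ := norm_nonneg _
  have hep0 : (0:ℝ) ≤ ‖ep‖ := norm_nonneg _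
  -- P ≤ ‖r₁‖‖e‖ + ‖r₂‖‖ep‖
  have hPle : P ≤ ‖r₁‖ * ‖e‖ + ‖r₂‖ * ‖ep‖ := by
    rw [hPval]
    have ha1 : r₁ e ≤ ‖r₁‖ * ‖e‖ :=
      le_trans (le_abs_self _) (by simpa [Real.norm_eq_abs] using r₁.le_opNorm e)
    have ha2 : -(r₂ ep) ≤ ‖r₂‖ * ‖ep‖ :=
      le_trans (neg_le_abs _) (by simpa [Real.norm_eq_abs] using r₂.le_opNorm ep)
    linarith
  have hsqα : 0 < Real.sqrt α := Real.sqrt_pos.mpr hα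
  -- s² ≤ (‖r₁‖/√α) s + ‖r₂‖‖ep‖
  have hs2le : s * s ≤ (‖r₁‖ / Real.sqrt α) * s + ‖r₂‖ * ‖ep‖ := by
    have h5 : ‖r₁‖ * ‖e‖ ≤ (‖r₁‖ / Real.sqrt α) * s := by
      rw [div_mul_eq_mul_div, le_div_iff₀ hsqα]
      calc ‖r₁‖ * ‖e‖ * Real.sqrt α = ‖r₁‖ * (Real.sqrt α * ‖e‖) := by ring
        _ ≤ ‖r₁‖ * s := by
            exact mul_le_mul_of_nonneg_left hne hR1
    have : s * s = P := by rw [← hs2]; ring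
    linarith
  -- hence s ≤ ‖r₁‖/√α + √(‖r₂‖‖ep‖)
  set c : ℝ := ‖r₂‖ * ‖ep‖ with hcdef
  have hc0 : 0 ≤ c := mul_nonneg hR2 hep0
  have hsc : Real.sqrt c ^ 2 = c := Real.sq_sqrt hc0
  have hb'0 : 0 ≤ ‖r₁‖ / Real.sqrt α := div_nonneg hR1 hsqα.le
  have hsle : s ≤ ‖r₁‖ / Real.sqrt α + Real.sqrt c := by
    by_contra hcon
    push_neg at hcon
    have hc0' : 0 ≤ Real.sqrt c := Real.sqrt_nonneg _
    have hs_pos : 0 < s := lt_of_le_of_lt (add_nonneg hb'0 hc0') hcon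
    have e1 := mul_lt_mul_of_pos_left hcon hs_pos
    have e2 : Real.sqrt c * Real.sqrt c ≤ Real.sqrt c * s :=
      mul_le_mul_of_nonneg_left (le_trans (le_add_of_nonneg_left hb'0) hcon.le) hc0'
    nlinarith [e1, e2, hsc, hs2le]
  -- Cauchy–Schwarz for the bilinear form at v₀
  have hv₀pos : 0 < a v₀ v₀ := lt_of_lt_of_le (by positivity) (hcoer v₀)
  have hCS : (a e v₀) ^ 2 ≤ P * a v₀ v₀ := by
    set t : ℝ := a e v₀ / a v₀ v₀ with htdef
    have hexp : a (e - t • v₀) (e - t • v₀) =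
        P - 2 * t * a e v₀ + t ^ 2 * a v₀ v₀ := by
      simp only [map_sub, map_smul, LinearMap.sub_apply, LinearMap.smul_apply,
        smul_eq_mul, hPdef]
      rw [hsymm v₀ e]
      ring
    have hpos : 0 ≤ a (e - t • v₀) (e - t • v₀) :=
      le_trans (by positivity) (hcoer _)
    rw [hexp] at hpos
    have hne0 : a v₀ v₀ ≠ 0 := ne_of_gt hv₀pos
    have htD : t * a v₀ v₀ = a e v₀ := div_mul_cancel₀ _ hne0
    exact cs_aux P (a e v₀) (a v₀ v₀) t hpos hv₀pos htD
  have havv : a v₀ v₀ ≤ γ * ‖v₀‖ * ‖v₀‖ := le_trans (le_abs_self _) (hcont v₀ v₀)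
  have hsqγ : 0 ≤ Real.sqrt γ := Real.sqrt_nonneg _
  have hsγ2 : Real.sqrt γ ^ 2 = γ := Real.sq_sqrt hγ.le
  -- a e v₀ ≤ s √γ ‖v₀‖
  have haev : a e v₀ ≤ s * Real.sqrt γ * ‖v₀‖ := by
    have hM : 0 ≤ s * Real.sqrt γ * ‖v₀‖ := by positivity
    have hsq : (a e v₀) ^ 2 ≤ (s * Real.sqrt γ * ‖v₀‖) ^ 2 := by
      have : (s * Real.sqrt γ * ‖v₀‖) ^ 2 = P * (γ * ‖v₀‖ * ‖v₀‖) := by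
        rw [mul_pow, mul_pow, hs2, hsγ2]; ring
      rw [this]
      calc (a e v₀) ^ 2 ≤ P * a v₀ v₀ := hCS
        _ ≤ P * (γ * ‖v₀‖ * ‖v₀‖) := mul_le_mul_of_nonneg_left havv hP0
    exact sq_le_aux _ _ hM hsq
  -- inf-sup gives β‖ep‖ ≤ √γ s
  have hbep : β * ‖ep‖ ≤ Real.sqrt γ * s := by
    have h6 : β * ‖ep‖ * ‖v₀‖ ≤ Real.sqrt γ * s * ‖v₀‖ := by
      calc β * ‖ep‖ * ‖v₀‖ ≤ b v₀ ep := hbv₀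
        _ = a e v₀ := (key v₀).symm
        _ ≤ s * Real.sqrt γ * ‖v₀‖ := haev
        _ = Real.sqrt γ * s * ‖v₀‖ := by ring
    exact le_of_mul_le_mul_right h6 hv₀n
  -- √γ/√α = √(γ/α)
  have hdiv : Real.sqrt γ / Real.sqrt α = Real.sqrt (γ / α) :=
    (Real.sqrt_div' γ hα.le).symm ▸ (Real.sqrt_div hγ.le α).symm
  have hamgm : 2 * β * (Real.sqrt γ * Real.sqrt c) ≤ γ * ‖r₂‖ + β ^ 2 * ‖ep‖ := by
    rw [hcdef]
    exact amgm_aux β γ ‖r₂‖ ‖ep‖ hβ hγ.le hR2 hep0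
  have hlin : β * ‖ep‖ ≤ Real.sqrt (γ / α) * ‖r₁‖ + Real.sqrt γ * Real.sqrt c := by
    have h12 : Real.sqrt γ * s ≤ Real.sqrt γ * (‖r₁‖ / Real.sqrt α + Real.sqrt c) :=
      mul_le_mul_of_nonneg_left hsle hsqγ
    rw [mul_add] at h12
    have h13 : Real.sqrt γ * (‖r₁‖ / Real.sqrt α) = Real.sqrt (γ / α) * ‖r₁‖ := by
      rw [← hdiv]; field_simp
    linarith [hbep, h12]
  have hb2 : (0:ℝ) < β ^ 2 := by positivity
  rw [show (2 / β) * Real.sqrt (γ / α) * ‖r₁‖ + (γ / β ^ 2) * ‖r₂‖ =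
    (2 * β * (Real.sqrt (γ / α) * ‖r₁‖) + γ * ‖r₂‖) / β ^ 2 by field_simp,
    le_div_iff₀ hb2]
  exact final_aux β ‖ep‖ (Real.sqrt (γ / α)) ‖r₁‖ γ ‖r₂‖
    (Real.sqrt γ * Real.sqrt c) hβ hlin hamgm
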